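/- arXiv:2005.02971 — 6 statements merged into one kernel-verified Lean document; each statement's English description precedes it below -/
import Mathlib

section
/- Let M be an m×m real symmetric positive semidefinite matrix. Then the operator norm of M as a map from (ℝ^m, ℓ∞ norm) to (ℝ^m, ℓ1 norm) satisfies trace(M) ≤ ‖M‖_{∞,1} ≤ 2^m · trace(M). -/
open Finset

noncomputable def bsgn (b : Bool) : ℝ := if b then 1 else -1

lemma bsgn_mul_self (b : Bool) : bsgn b * bsgn b = 1 := by
  cases b <;> simp [bsgn]

lemma abs_bsgn (b : Bool) : |bsgn b| = 1 := by
  cases b <;> simp [bsgn]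

lemma bsgn_not (b : Bool) : bsgn (!b) = - bsgn b := by
  cases b <;> simp [bsgn]

lemma sum_bsgn_mul {m : ℕ} {i j : Fin m} (hij : i ≠ j) :
    ∑ s : Fin m → Bool, bsgn (s i) * bsgn (s j) = 0 := by
  classical
  apply Finset.sum_ninvolution (fun s => Function.update s j (!s j))
  · intro s
    simp [Function.update_apply, hij, bsgn_not]
  · intro s hs h
    have := congrFun h j
    simp at this
  · intro s; simp
  · intro s
    funext k
    by_cases hk : k = j
    · subst hk; simp
    · simp [Function.update_apply, hk]

lemma sum_bsgn_same {m : ℕ} (i : Fin m) :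
    ∑ s : Fin m → Bool, bsgn (s i) * bsgn (s i) = 2 ^ m := by
  classical
  simp only [bsgn_mul_self, Finset.sum_const, Finset.card_univ, nsmul_eq_mul, mul_one]
  simp [Fintype.card_fun]


/-- For an m×m real symmetric PSD matrix M,
trace(M) ≤ ‖M‖_{∞,1} ≤ 2^m · trace(M), where ‖M‖_{∞,1} is the operator
norm from (ℝ^m, ℓ∞) to (ℝ^m, ℓ1), i.e. the sup of ‖Mu‖₁ over ‖u‖_∞ = 1. -/
theorem stmt0 (m : ℕ) (M : Matrix (Fin m) (Fin m) ℝ) (hM : M.PosSemidef) :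
    M.trace ≤ sSup {y : ℝ | ∃ u : Fin m → ℝ,
        (∀ i, |u i| ≤ 1) ∧ (∃ i, |u i| = 1) ∧ y = ∑ i, |M.mulVec u i|} ∧
    sSup {y : ℝ | ∃ u : Fin m → ℝ,
        (∀ i, |u i| ≤ 1) ∧ (∃ i, |u i| = 1) ∧ y = ∑ i, |M.mulVec u i|}
      ≤ 2 ^ m * M.trace := by
  classical
  set S : Set ℝ := {y : ℝ | ∃ u : Fin m → ℝ,
        (∀ i, |u i| ≤ 1) ∧ (∃ i, |u i| = 1) ∧ y = ∑ i, |M.mulVec u i|} with hSdef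
  have hdiag : ∀ i, 0 ≤ M i i := fun i => by simpa using hM.dotProduct_mulVec_nonneg (Pi.single i 1)
  have htr : M.trace = ∑ i, M i i := rfl
  have htr0 : 0 ≤ M.trace := htr ▸ Finset.sum_nonneg fun i _ => hdiag i
  have hsym : ∀ i j, M j i = M i j := fun i j => by
    have := congrFun (congrFun hM.1 i) j
    simpa using this
  have habs : ∀ i j, |M i j| ≤ (M i i + M j j) / 2 := by
    intro i j
    by_cases hij : i = j
    · subst hij
      rw [abs_of_nonneg (hdiag i)]
      linarith [hdiag i]
    · have h1 := hM.dotProduct_mulVec_nonneg (Pi.single i 1 + Pi.single j (1 : ℝ))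
      have h2 := hM.dotProduct_mulVec_nonneg (Pi.single i 1 + Pi.single j (-1 : ℝ))
      simp [Matrix.mulVec_add, dotProduct_add, add_dotProduct,
        Pi.single_apply, hij, Ne.symm hij] at h1 h2
      have hs := hsym i j
      rw [abs_le]
      constructor <;> nlinarith [h1, h2]
  -- upper bound on elements of S
  have hub : ∀ u : Fin m → ℝ, (∀ i, |u i| ≤ 1) →
      ∑ i, |M.mulVec u i| ≤ (m : ℝ) * M.trace := by
    intro u hu
    have h1 : ∀ i, |M.mulVec u i| ≤ ∑ j, (M i i + M j j) / 2 := by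
      intro i
      calc |M.mulVec u i| = |∑ j, M i j * u j| := by
            simp [Matrix.mulVec, dotProduct]
        _ ≤ ∑ j, |M i j * u j| := Finset.abs_sum_le_sum_abs _ _
        _ ≤ ∑ j, (M i i + M j j) / 2 := Finset.sum_le_sum fun j _ => by
            rw [abs_mul]
            exact le_trans (mul_le_of_le_one_right (abs_nonneg _) (hu j)) (habs i j)
    calc ∑ i, |M.mulVec u i| ≤ ∑ i : Fin m, ∑ j : Fin m, (M i i + M j j) / 2 :=
          Finset.sum_le_sum fun i _ => h1 i
      _ = (m : ℝ) * M.trace := by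
          rw [htr]
          simp only [add_div, Finset.sum_add_distrib, Finset.sum_div, Finset.sum_const,
            Finset.card_univ, Fintype.card_fin, nsmul_eq_mul, Finset.mul_sum]
          rw [← Finset.sum_add_distrib]
          exact Finset.sum_congr rfl fun i _ => by ring
  have hbdd : BddAbove S := by
    refine ⟨(m : ℝ) * M.trace, ?_⟩
    rintro y ⟨u, hu, -, rfl⟩
    exact hub u hu
  constructor
  · -- lower bound
    rcases Nat.eq_zero_or_pos m with hm | hm
    · subst hm
      have hS : S = ∅ := by
        rw [Set.eq_empty_iff_forall_notMem]
        rintro y ⟨u, -, ⟨i, -⟩, -⟩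
        exact i.elim0
      rw [hS, Real.sSup_empty]
      simp [htr]
    · have hsum : ∑ s : Fin m → Bool, (∑ i, ∑ j, M i j * (bsgn (s i) * bsgn (s j)))
          = 2 ^ m * M.trace := by
        rw [Finset.sum_comm]
        have key : ∀ i : Fin m, ∑ s : Fin m → Bool, ∑ j, M i j * (bsgn (s i) * bsgn (s j))
            = 2 ^ m * M i i := by
          intro i
          rw [Finset.sum_comm]
          have hj : ∀ j : Fin m, ∑ s : Fin m → Bool, M i j * (bsgn (s i) * bsgn (s j))
              = if j = i then 2 ^ m * M i i else 0 := by
            intro j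
            rw [← Finset.mul_sum]
            by_cases hji : j = i
            · subst hji; rw [if_pos rfl, sum_bsgn_same]; ring
            · rw [sum_bsgn_mul (fun h => hji h.symm)]
              simp [hji]
          simp [hj]
        simp only [key]
        rw [htr, Finset.mul_sum]
      have hex : ∃ s : Fin m → Bool,
          M.trace ≤ ∑ i, ∑ j, M i j * (bsgn (s i) * bsgn (s j)) := by
        by_contra hc
        push_neg at hc
        have hlt : ∑ s : Fin m → Bool, (∑ i, ∑ j, M i j * (bsgn (s i) * bsgn (s j)))
            < ∑ _s : Fin m → Bool, M.trace :=
          Finset.sum_lt_sum_of_nonempty Finset.univ_nonempty fun s _ => hc s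
        rw [hsum, Finset.sum_const, Finset.card_univ, Fintype.card_fun] at hlt
        simp [nsmul_eq_mul] at hlt
      obtain ⟨s, hs⟩ := hex
      set u : Fin m → ℝ := fun k => bsgn (s k) with hudef
      have hq : ∑ i, ∑ j, M i j * (u i * u j) ≤ ∑ i, |M.mulVec u i| := by
        calc ∑ i, ∑ j, M i j * (u i * u j) = ∑ i, u i * M.mulVec u i := by
              refine Finset.sum_congr rfl fun i _ => ?_
              simp only [Matrix.mulVec, dotProduct, Finset.mul_sum]
              exact Finset.sum_congr rfl fun j _ => by ring
          _ ≤ ∑ i, |u i * M.mulVec u i| := Finset.sum_le_sum fun i _ => le_abs_self _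
          _ = ∑ i, |M.mulVec u i| := by
              refine Finset.sum_congr rfl fun i _ => ?_
              rw [abs_mul, hudef, abs_bsgn, one_mul]
      have hmem : (∑ i, |M.mulVec u i|) ∈ S :=
        ⟨u, fun i => le_of_eq (abs_bsgn _), ⟨⟨0, hm⟩, abs_bsgn _⟩, rfl⟩
      exact le_trans (le_trans hs hq) (le_csSup hbdd hmem)
  · -- upper bound
    refine Real.sSup_le ?_ (by positivity)
    rintro y ⟨u, hu, -, rfl⟩
    refine le_trans (hub u hu) ?_
    have hm2 : (m : ℝ) ≤ 2 ^ m := by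
      exact_mod_cast (Nat.lt_two_pow_self (n := m)).le
    exact mul_le_mul_of_nonneg_right hm2 htr0
end

section
/- Let M be an m×m real symmetric positive semidefinite matrix and let V be the 2^m × m matrix whose rows enumerate all sign vectors in {-1,1}^m. Then the maximum over x ∈ {-1,1}^m of ‖Mx‖_1 equals the maximum diagonal entry of V M Vᵀ. -/
open Matrix

/-- For an m×m real symmetric PSD matrix M and the 2^m × m matrix
V whose rows enumerate all sign vectors in {-1,1}^m, the maximum of ‖Mx‖₁ over
x ∈ {-1,1}^m equals the maximum diagonal entry of V M Vᵀ. -/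
theorem stmt2 (m : ℕ) (M : Matrix (Fin m) (Fin m) ℝ) (hM : M.PosSemidef)
    (V : Matrix (Fin m → Bool) (Fin m) ℝ)
    (hV : ∀ b i, V b i = if b i then 1 else -1) :
    sSup {y : ℝ | ∃ x : Fin m → ℝ, (∀ i, x i = 1 ∨ x i = -1) ∧
        y = ∑ i, |M.mulVec x i|} =
    sSup {y : ℝ | ∃ b : Fin m → Bool, y = (V * M * Vᵀ) b b} := by
  classical
  set s : (Fin m → Bool) → Fin m → ℝ := fun b i => if b i then 1 else -1 with hsdef
  set A : Set ℝ := {y : ℝ | ∃ x : Fin m → ℝ, (∀ i, x i = 1 ∨ x i = -1) ∧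
        y = ∑ i, |M.mulVec x i|} with hA
  set B : Set ℝ := {y : ℝ | ∃ b : Fin m → Bool, y = (V * M * Vᵀ) b b} with hB
  -- quadratic form identity
  have hquad : ∀ b, (V * M * Vᵀ) b b = (s b) ⬝ᵥ M.mulVec (s b) := by
    intro b
    simp only [Matrix.mul_apply, Matrix.transpose_apply, Matrix.mulVec, dotProduct,
      Finset.sum_mul, Finset.mul_sum]
    rw [Finset.sum_comm]
    refine Finset.sum_congr rfl fun i _ => Finset.sum_congr rfl fun j _ => ?_
    simp [hV, hsdef]
  -- symmetry
  have hMsym : ∀ i j, M i j = M j i := by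
    intro i j
    have := congrFun (congrFun hM.1 i) j
    simpa [Matrix.conjTranspose_apply] using this.symm
  have hsym : ∀ x y : Fin m → ℝ, x ⬝ᵥ M.mulVec y = y ⬝ᵥ M.mulVec x := by
    intro x y
    simp only [dotProduct, Matrix.mulVec, Finset.mul_sum]
    rw [Finset.sum_comm]
    refine Finset.sum_congr rfl fun i _ => Finset.sum_congr rfl fun j _ => ?_
    rw [hMsym j i]; ring
  have hpsd : ∀ x : Fin m → ℝ, 0 ≤ x ⬝ᵥ M.mulVec x := by
    intro x
    have := hM.dotProduct_mulVec_nonneg x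
    simpa using this
  -- each set is a finite range
  have hAeq : A = Set.range (fun b : Fin m → Bool => ∑ i, |M.mulVec (s b) i|) := by
    ext y
    constructor
    · rintro ⟨x, hx, rfl⟩
      refine ⟨fun i => decide (x i = 1), ?_⟩
      have hx' : x = s (fun i => decide (x i = 1)) := by
        funext j
        rcases hx j with h | h <;> simp [hsdef, h] <;> norm_num
      show ∑ i, |(M *ᵥ s (fun i => decide (x i = 1))) i| = ∑ i, |(M *ᵥ x) i|
      rw [← hx']
    · rintro ⟨b, rfl⟩
      exact ⟨s b, fun i => by by_cases h : b i <;> simp [hsdef, h], rfl⟩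
  have hBeq : B = Set.range (fun b : Fin m → Bool => (V * M * Vᵀ) b b) := by
    ext y; constructor
    · rintro ⟨b, rfl⟩; exact ⟨b, rfl⟩
    · rintro ⟨b, rfl⟩; exact ⟨b, rfl⟩
  have hAne : A.Nonempty := by
    rw [hAeq]; exact ⟨_, ⟨fun _ => true, rfl⟩⟩
  have hBne : B.Nonempty := by
    rw [hBeq]; exact ⟨_, ⟨fun _ => true, rfl⟩⟩
  have hAfin : A.Finite := by rw [hAeq]; exact Set.finite_range _
  have hBfin : B.Finite := by rw [hBeq]; exact Set.finite_range _
  have hAbdd : BddAbove A := hAfin.bddAbove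
  have hBbdd : BddAbove B := hBfin.bddAbove
  -- s b entries are ±1
  have hsb : ∀ (b : Fin m → Bool) i, s b i = 1 ∨ s b i = -1 := by
    intro b i; by_cases h : b i <;> simp [hsdef, h]
  apply le_antisymm
  · -- sSup A ≤ sSup B
    apply csSup_le hAne
    rw [hAeq]
    rintro y ⟨b, rfl⟩
    set v : Fin m → ℝ := M.mulVec (s b) with hv
    set b' : Fin m → Bool := fun i => decide (0 ≤ v i) with hb'
    have habs : ∀ i, |v i| = s b' i * v i := by
      intro i
      by_cases h : 0 ≤ v i
      · simp [hsdef, hb', h, abs_of_nonneg h]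
      · simp [hsdef, hb', h, abs_of_neg (lt_of_not_ge h)]
    have h1 : ∑ i, |v i| = (s b') ⬝ᵥ v := by
      simp only [dotProduct]
      exact Finset.sum_congr rfl fun i _ => habs i
    have key : 2 * ((s b') ⬝ᵥ v) ≤ (s b') ⬝ᵥ M.mulVec (s b') + (s b) ⬝ᵥ M.mulVec (s b) := by
      have h0 : 0 ≤ (s b' - s b) ⬝ᵥ M.mulVec (s b' - s b) := hpsd _
      have hexp : (s b' - s b) ⬝ᵥ M.mulVec (s b' - s b)
          = (s b') ⬝ᵥ M.mulVec (s b') - 2 * ((s b') ⬝ᵥ M.mulVec (s b))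
            + (s b) ⬝ᵥ M.mulVec (s b) := by
        simp only [Matrix.mulVec_sub, sub_dotProduct, dotProduct_sub,
          hsym (s b) (s b')]
        ring
      rw [hexp] at h0
      linarith
    have hm1 : (s b') ⬝ᵥ M.mulVec (s b') ≤ sSup B := by
      apply le_csSup hBbdd
      exact ⟨b', (hquad b').symm ▸ rfl⟩
    have hm2 : (s b) ⬝ᵥ M.mulVec (s b) ≤ sSup B := by
      apply le_csSup hBbdd
      exact ⟨b, (hquad b).symm ▸ rfl⟩
    show ∑ i, |v i| ≤ sSup B
    rw [h1]
    linarith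
  · -- sSup B ≤ sSup A
    apply csSup_le hBne
    rintro y ⟨b, rfl⟩
    rw [hquad b]
    have h1 : (s b) ⬝ᵥ M.mulVec (s b) ≤ ∑ i, |M.mulVec (s b) i| := by
      simp only [dotProduct]
      apply Finset.sum_le_sum
      intro i _
      rcases hsb b i with h | h
      · rw [h, one_mul]; exact le_abs_self _
      · rw [h]; rw [neg_one_mul]; exact neg_le_abs _
    refine le_trans h1 (le_csSup hAbdd ?_)
    exact ⟨s b, hsb b, rfl⟩
end

section
/- Let K : ℕ × ℕ → ℝ be a symmetric positive semidefinite kernel such that the associated linear operator u ↦ (i ↦ Σ_j K(i,j)u(j)) is a bounded operator from ℓ∞ to ℓ1. Then Σ_i K(i,i) < ∞, i.e., K has finite trace. -/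
lemma sign_sum_ne (n : ℕ) (a b : Fin n) (hab : a ≠ b) :
    ∑ σ : Fin n → Bool, ((if σ a then (1:ℝ) else -1) * (if σ b then (1:ℝ) else -1)) = 0 := by
  set f : (Fin n → Bool) → ℝ := fun σ => (if σ a then (1:ℝ) else -1) * (if σ b then (1:ℝ) else -1) with hf
  have hinv : Function.Involutive (fun σ : Fin n → Bool => Function.update σ a (!σ a)) := by
    intro σ; funext x
    by_cases hx : x = a
    · subst hx; simp
    · simp [Function.update_of_ne hx]
  have key : ∀ σ, (fun σ => -(f σ)) σ = f ((fun σ : Fin n → Bool => Function.update σ a (!σ a)) σ) := by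
    intro σ
    simp only [hf, Function.update_self, Function.update_of_ne hab.symm]
    cases σ a <;> cases σ b <;> norm_num
  have := Fintype.sum_bijective _ hinv.bijective (fun σ => -(f σ)) f key
  simp only [Finset.sum_neg_distrib] at this
  linarith



/-- A kernel on ℕ is positive semidefinite if every finite principal
submatrix is (symmetric) positive semidefinite. -/
def KernelPSD (K : ℕ → ℕ → ℝ) : Prop :=
  ∀ (m : ℕ) (p : Fin m → ℕ),
    (Matrix.of fun a b : Fin m => K (p a) (p b)).PosSemidef

/-- BIBO stability of a kernel: the induced operator u ↦ (i ↦ Σ_j K i j * u j)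
is a bounded operator from ℓ∞ to ℓ1 (sup over the ℓ∞ unit ball is finite). -/
def KernelStable (K : ℕ → ℕ → ℝ) : Prop :=
  ∃ C : ℝ, ∀ u : ℕ → ℝ, (∀ j, |u j| ≤ 1) →
    (∀ i, Summable fun j => K i j * u j) ∧
    Summable (fun i => |∑' j, K i j * u j|) ∧
    (∑' i, |∑' j, K i j * u j|) ≤ C

/-- A BIBO stable symmetric PSD kernel has finite trace. -/
theorem stmt4 (K : ℕ → ℕ → ℝ) (hsym : ∀ i j, K i j = K j i)
    (hK : KernelPSD K) (hstab : KernelStable K) :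
    Summable (fun i => K i i) := by
  obtain ⟨C, hC⟩ := hstab
  have hdiag : ∀ i, 0 ≤ K i i := by
    intro i
    have h := (hK 1 (fun _ => i)).diag_nonneg (i := 0)
    simpa [Matrix.mulVec, dotProduct] using h
  apply summable_of_sum_range_le hdiag
  intro n
  classical
  set u : (Fin n → Bool) → ℕ → ℝ :=
    fun σ j => if h : j < n then (if σ ⟨j, h⟩ then 1 else -1) else 0 with hu
  have hub : ∀ σ j, |u σ j| ≤ 1 := by
    intro σ j
    simp only [hu]
    by_cases h : j < n
    · simp only [dif_pos h]; split <;> norm_num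
    · simp [dif_neg h]
  have hspec := fun σ => hC (u σ) (hub σ)
  have htsum : ∀ σ i, (∑' j, K i j * u σ j) = ∑ j ∈ Finset.range n, K i j * u σ j := by
    intro σ i
    apply tsum_eq_sum
    intro j hj
    have hjn : ¬ j < n := by simpa using hj
    simp [hu, dif_neg hjn]
  -- per-σ bound
  have hQ : ∀ σ, ∑ i ∈ Finset.range n, (u σ i * ∑ j ∈ Finset.range n, K i j * u σ j) ≤ C := by
    intro σ
    obtain ⟨h1, h2, h3⟩ := hspec σ
    calc ∑ i ∈ Finset.range n, (u σ i * ∑ j ∈ Finset.range n, K i j * u σ j)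
        ≤ ∑ i ∈ Finset.range n, |∑' j, K i j * u σ j| := by
          apply Finset.sum_le_sum
          intro i _
          rw [htsum σ i]
          calc u σ i * ∑ j ∈ Finset.range n, K i j * u σ j
              ≤ |u σ i * ∑ j ∈ Finset.range n, K i j * u σ j| := le_abs_self _
            _ = |u σ i| * |∑ j ∈ Finset.range n, K i j * u σ j| := abs_mul _ _
            _ ≤ 1 * |∑ j ∈ Finset.range n, K i j * u σ j| := by
                exact mul_le_mul_of_nonneg_right (hub σ i) (abs_nonneg _)
            _ = |∑ j ∈ Finset.range n, K i j * u σ j| := one_mul _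
      _ ≤ ∑' i, |∑' j, K i j * u σ j| := h2.sum_le_tsum _ (fun i _ => abs_nonneg _)
      _ ≤ C := h3
  -- averaging
  have havg : ∑ σ : Fin n → Bool, ∑ i ∈ Finset.range n, (u σ i * ∑ j ∈ Finset.range n, K i j * u σ j)
      = (2:ℝ)^n * ∑ i ∈ Finset.range n, K i i := by
    have swap : ∑ σ : Fin n → Bool, ∑ i ∈ Finset.range n, (u σ i * ∑ j ∈ Finset.range n, K i j * u σ j)
        = ∑ i ∈ Finset.range n, ∑ j ∈ Finset.range n,
            K i j * ∑ σ : Fin n → Bool, u σ i * u σ j := by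
      rw [Finset.sum_comm]
      congr 1
      ext i
      simp only [Finset.mul_sum, Finset.sum_mul]
      rw [Finset.sum_comm]
      congr 1
      ext σ
      congr 1
      ext j
      ring
    rw [swap]
    have hsig : ∀ i ∈ Finset.range n, ∀ j ∈ Finset.range n,
        (∑ σ : Fin n → Bool, u σ i * u σ j) = if i = j then (2:ℝ)^n else 0 := by
      intro i hi j hj
      have hi' : i < n := Finset.mem_range.mp hi
      have hj' : j < n := Finset.mem_range.mp hj
      by_cases hij : i = j
      · subst hij
        simp only [if_pos rfl]
        have : ∀ σ : Fin n → Bool, u σ i * u σ i = 1 := by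
          intro σ
          simp only [hu, dif_pos hi']
          split <;> norm_num
        rw [Finset.sum_congr rfl (fun σ _ => this σ)]
        simp [Finset.card_univ]
      · rw [if_neg hij]
        have heq : ∀ σ : Fin n → Bool, u σ i * u σ j
            = (if σ ⟨i, hi'⟩ then (1:ℝ) else -1) * (if σ ⟨j, hj'⟩ then (1:ℝ) else -1) := by
          intro σ
          simp [hu, dif_pos hi', dif_pos hj']
        rw [Finset.sum_congr rfl (fun σ _ => heq σ)]
        exact sign_sum_ne n ⟨i, hi'⟩ ⟨j, hj'⟩ (by simpa using hij)
    calc ∑ i ∈ Finset.range n, ∑ j ∈ Finset.range n, K i j * ∑ σ : Fin n → Bool, u σ i * u σ j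
        = ∑ i ∈ Finset.range n, ∑ j ∈ Finset.range n, K i j * (if i = j then (2:ℝ)^n else 0) := by
          apply Finset.sum_congr rfl; intro i hi
          apply Finset.sum_congr rfl; intro j hj
          rw [hsig i hi j hj]
      _ = ∑ i ∈ Finset.range n, K i i * (2:ℝ)^n := by
          apply Finset.sum_congr rfl; intro i hi
          rw [Finset.sum_eq_single i]
          · simp
          · intro j _ hji; simp [Ne.symm hji]
          · intro h; exact absurd hi h
      _ = (2:ℝ)^n * ∑ i ∈ Finset.range n, K i i := by rw [Finset.mul_sum]; congr 1; ext; ring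
  have hcard : ∑ σ : Fin n → Bool, C = (2:ℝ)^n * C := by
    simp [Finset.card_univ]
  have hbound : (2:ℝ)^n * ∑ i ∈ Finset.range n, K i i ≤ (2:ℝ)^n * C := by
    rw [← havg, ← hcard]
    exact Finset.sum_le_sum (fun σ _ => hQ σ)
  have hpos : (0:ℝ) < (2:ℝ)^n := by positivity
  exact le_of_mul_le_mul_left hbound hpos
end

section
/- Let K : ℕ × ℕ → ℝ be a symmetric positive semidefinite kernel whose diagonal satisfies K(i,i) ≥ c/i^δ for some c > 0 and δ ≤ 1 and all i ≥ 1. Then K is not BIBO stable, i.e., the RKHS induced by K is not contained in ℓ1. -/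
open Finset

/-- For any symmetric kernel and any n, there is a sign pattern supported on
`range n` whose quadratic form dominates the trace over `range n`. -/
lemma sign_lemma (K : ℕ → ℕ → ℝ) (hsym : ∀ i j, K i j = K j i) (n : ℕ) :
    ∃ ε : ℕ → ℝ, (∀ j, |ε j| ≤ 1) ∧ (∀ j, n ≤ j → ε j = 0) ∧
      ∑ i ∈ range n, K i i ≤
        ∑ i ∈ range n, ε i * ∑ j ∈ range n, K i j * ε j := by
  induction n with
  | zero => exact ⟨0, by simp, by simp, by simp⟩
  | succ n ih =>
    obtain ⟨ε, h1, h2, h3⟩ := ih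
    set s := ∑ j ∈ range n, K n j * ε j with hs
    set e : ℝ := if 0 ≤ s then 1 else -1 with he
    have he1 : |e| ≤ 1 := by
      rw [he]; split <;> simp
    have hes : 0 ≤ e * s := by
      rw [he]; split
      · simpa
      · push_neg at *; nlinarith
    have hee : e * e = 1 := by rw [he]; split <;> ring
    refine ⟨fun j => if j = n then e else ε j, fun j => ?_, fun j hj => ?_, ?_⟩
    · by_cases h : j = n <;> simp [h, he1, h1 j]
    · have : j ≠ n := by omega
      simp [this, h2 j (by omega)]
    · have hinner : ∀ i ∈ range n,
          (fun j => if j = n then e else ε j) i *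
            ∑ j ∈ range (n+1), K i j * (if j = n then e else ε j)
          = ε i * ((∑ j ∈ range n, K i j * ε j) + K i n * e) := by
        intro i hi
        have hi' : i ≠ n := by simp at hi; omega
        rw [Finset.sum_range_succ]
        simp only [hi', if_false, if_true]
        congr 2
        refine Finset.sum_congr rfl fun j hj => ?_
        have : j ≠ n := by simp at hj; omega
        simp [this]
      rw [Finset.sum_range_succ, Finset.sum_range_succ]
      rw [Finset.sum_congr rfl hinner]
      have hlast : (fun j => if j = n then e else ε j) n *
          ∑ j ∈ range (n+1), K n j * (if j = n then e else ε j)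
          = e * (s + K n n * e) := by
        rw [Finset.sum_range_succ]
        simp only [if_pos rfl]
        have hss : ∑ x ∈ range n, K n x * (if x = n then e else ε x) = s := by
          rw [hs]
          refine Finset.sum_congr rfl fun j hj => ?_
          have : j ≠ n := by simp at hj; omega
          simp [this]
        rw [hss]
        simp
      rw [hlast]
      have hcross : ∑ i ∈ range n, ε i * (K i n * e) = e * s := by
        rw [hs, Finset.mul_sum]
        refine Finset.sum_congr rfl fun i hi => ?_
        rw [hsym i n]; ring
      have expand : ∑ i ∈ range n, ε i * ((∑ j ∈ range n, K i j * ε j) + K i n * e)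
          = (∑ i ∈ range n, ε i * ∑ j ∈ range n, K i j * ε j) + e * s := by
        rw [← hcross, ← Finset.sum_add_distrib]
        exact Finset.sum_congr rfl fun i _ => by ring
      rw [expand]
      have : e * (s + K n n * e) = e * s + K n n * (e * e) := by ring
      rw [this, hee, mul_one]
      linarith

/-- A symmetric PSD kernel whose diagonal satisfies
K(i,i) ≥ c/i^δ (for some c > 0, δ ≤ 1, all i ≥ 1) is not BIBO stable. -/
theorem stmt10 (K : ℕ → ℕ → ℝ) (hsym : ∀ i j, K i j = K j i)
    (hK : KernelPSD K) (c δ : ℝ) (hc : 0 < c) (hδ : δ ≤ 1)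
    (hdiag : ∀ i : ℕ, 1 ≤ i → c / (i : ℝ) ^ δ ≤ K i i) :
    ¬ KernelStable K := by
  rintro ⟨C, hC⟩
  -- Step 1: the partial traces are bounded by C.
  have key : ∀ n : ℕ, ∑ i ∈ range n, K i i ≤ C := by
    intro n
    obtain ⟨ε, h1, h2, h3⟩ := sign_lemma K hsym n
    obtain ⟨hsum, habs, hle⟩ := hC ε h1
    have htsum : ∀ i, ∑' j, K i j * ε j = ∑ j ∈ range n, K i j * ε j := by
      intro i
      refine tsum_eq_sum fun b hb => ?_
      rw [h2 b (by simpa using hb), mul_zero]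
    calc ∑ i ∈ range n, K i i
        ≤ ∑ i ∈ range n, ε i * ∑ j ∈ range n, K i j * ε j := h3
      _ ≤ ∑ i ∈ range n, |∑' j, K i j * ε j| := by
          refine Finset.sum_le_sum fun i _ => ?_
          rw [htsum i]
          calc ε i * ∑ j ∈ range n, K i j * ε j
              ≤ |ε i * ∑ j ∈ range n, K i j * ε j| := le_abs_self _
            _ = |ε i| * |∑ j ∈ range n, K i j * ε j| := abs_mul _ _
            _ ≤ 1 * |∑ j ∈ range n, K i j * ε j| :=
                mul_le_mul_of_nonneg_right (h1 i) (abs_nonneg _)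
            _ = |∑ j ∈ range n, K i j * ε j| := one_mul _
      _ ≤ ∑' i, |∑' j, K i j * ε j| :=
          Summable.sum_le_tsum _ (fun i _ => abs_nonneg _) habs
      _ ≤ C := hle
  -- Step 2: diagonal lower bounds.
  have h00 : 0 ≤ K 0 0 := by
    have := (hK 1 (fun _ => 0)).diag_nonneg (i := 0)
    simpa [Matrix.mulVec, dotProduct] using this
  have hd : ∀ i : ℕ, c / ((i : ℝ) + 1) ≤ K (i+1) (i+1) := by
    intro i
    have h1 : (1:ℝ) ≤ (i : ℝ) + 1 := by
      have : (0:ℝ) ≤ i := Nat.cast_nonneg i; linarith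
    have hpow : ((i : ℝ) + 1) ^ δ ≤ ((i : ℝ) + 1) := by
      calc ((i : ℝ) + 1) ^ δ ≤ ((i : ℝ) + 1) ^ (1:ℝ) :=
            Real.rpow_le_rpow_of_exponent_le h1 hδ
        _ = (i : ℝ) + 1 := Real.rpow_one _
    have hpos : (0:ℝ) < ((i : ℝ) + 1) ^ δ := Real.rpow_pos_of_pos (by positivity) _
    have := hdiag (i+1) (by omega)
    calc c / ((i : ℝ) + 1) ≤ c / ((i : ℝ) + 1) ^ δ :=
          div_le_div_of_nonneg_left hc.le hpos hpow
      _ ≤ K (i+1) (i+1) := by push_cast at this ⊢; exact this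
  -- Step 3: harmonic divergence gives a contradiction.
  have hharm := Real.tendsto_sum_range_one_div_nat_succ_atTop
  have htend : Filter.Tendsto
      (fun n => c * ∑ i ∈ range n, (1 : ℝ) / (i + 1)) Filter.atTop Filter.atTop :=
    Filter.Tendsto.const_mul_atTop hc hharm
  obtain ⟨n, hn⟩ := (htend.eventually_gt_atTop C).exists
  have hbound : c * ∑ i ∈ range n, (1 : ℝ) / (i + 1) ≤ C := by
    calc c * ∑ i ∈ range n, (1 : ℝ) / (i + 1)
        = ∑ i ∈ range n, c / ((i : ℝ) + 1) := by
          rw [Finset.mul_sum]; exact Finset.sum_congr rfl fun i _ => by ring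
      _ ≤ ∑ i ∈ range n, K (i+1) (i+1) := Finset.sum_le_sum fun i _ => hd i
      _ ≤ ∑ i ∈ range (n+1), K i i := by
          rw [Finset.sum_range_succ']; linarith
      _ ≤ C := key (n+1)
  linarith
end

section
/- Let M : ℕ × ℕ → ℝ be a symmetric positive semidefinite kernel with finite trace, let P_n denote the projection onto the first n coordinates, and let v ∈ ℓ2 with P_n v = 0. Then ‖Mv‖_2 ≤ sqrt(Σ_{h>n} M(h,h)) · sqrt(Σ_h M(h,h)) · ‖v‖_2. -/
/-- Cauchy–Schwarz for tsums of nonnegative sequences. -/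
lemma tsum_cs (f g : ℕ → ℝ) (hf0 : ∀ i, 0 ≤ f i) (hg0 : ∀ i, 0 ≤ g i)
    (hf : Summable fun i => f i ^ 2) (hg : Summable fun i => g i ^ 2) :
    ∑' i, f i * g i ≤ Real.sqrt (∑' i, f i ^ 2) * Real.sqrt (∑' i, g i ^ 2) := by
  have hfg : Summable fun i => f i * g i := by
    apply Summable.of_nonneg_of_le (fun i => mul_nonneg (hf0 i) (hg0 i))
      (fun i => ?_) ((hf.add hg).div_const 2)
    nlinarith [sq_nonneg (f i - g i)]
  refine Summable.tsum_le_of_sum_le hfg fun s => ?_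
  have h1 : (∑ i ∈ s, f i * g i) ^ 2 ≤ (∑ i ∈ s, f i ^ 2) * ∑ i ∈ s, g i ^ 2 :=
    Finset.sum_mul_sq_le_sq_mul_sq s f g
  have h2 : ∑ i ∈ s, f i ^ 2 ≤ ∑' i, f i ^ 2 := Summable.sum_le_tsum s (fun i _ => sq_nonneg _) hf
  have h3 : ∑ i ∈ s, g i ^ 2 ≤ ∑' i, g i ^ 2 := Summable.sum_le_tsum s (fun i _ => sq_nonneg _) hg
  have hs0 : 0 ≤ ∑ i ∈ s, f i * g i :=
    Finset.sum_nonneg fun i _ => mul_nonneg (hf0 i) (hg0 i)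
  calc ∑ i ∈ s, f i * g i = Real.sqrt ((∑ i ∈ s, f i * g i) ^ 2) := (Real.sqrt_sq hs0).symm
    _ ≤ Real.sqrt ((∑ i ∈ s, f i ^ 2) * ∑ i ∈ s, g i ^ 2) := Real.sqrt_le_sqrt h1
    _ ≤ Real.sqrt ((∑' i, f i ^ 2) * ∑' i, g i ^ 2) := by
        apply Real.sqrt_le_sqrt
        exact mul_le_mul h2 h3 (Finset.sum_nonneg fun i _ => sq_nonneg _)
          (tsum_nonneg fun i => sq_nonneg _)
    _ = Real.sqrt (∑' i, f i ^ 2) * Real.sqrt (∑' i, g i ^ 2) :=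
        Real.sqrt_mul (tsum_nonneg fun i => sq_nonneg _) _

/-- For a finite-trace symmetric PSD kernel M and v ∈ ℓ2
supported on indices ≥ n (i.e. P_n v = 0),
‖Mv‖₂ ≤ sqrt(tr_n(M)) · sqrt(tr(M)) · ‖v‖₂, where tr_n is the tail trace. -/
theorem stmt12 (M : ℕ → ℕ → ℝ) (hsym : ∀ i j, M i j = M j i)
    (hM : KernelPSD M) (htr : Summable fun i => M i i)
    (n : ℕ) (v : ℕ → ℝ) (hv : Summable fun i => (v i) ^ 2)
    (hsupp : ∀ i < n, v i = 0) :
    Real.sqrt (∑' i, (∑' j, M i j * v j) ^ 2) ≤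
      Real.sqrt (∑' h : ℕ, M (n + h) (n + h)) *
        Real.sqrt (∑' h, M h h) * Real.sqrt (∑' i, (v i) ^ 2) := by
  have hd : ∀ i, 0 ≤ M i i := by
    intro i
    have h := (hM 1 ![i]).dotProduct_mulVec_nonneg ![1]
    simpa [dotProduct, Matrix.mulVec, Fin.sum_univ_one] using h
  have hcs2 : ∀ i j, M i j ^ 2 ≤ M i i * M j j := by
    intro i j
    have key : ∀ t : ℝ, 0 ≤ M i i * (t * t) + (2 * M i j) * t + M j j := by
      intro t
      have h := (hM 2 ![i, j]).dotProduct_mulVec_nonneg ![t, 1]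
      simp [dotProduct, Matrix.mulVec, Fin.sum_univ_two] at h
      rw [← hsym i j] at h
      nlinarith [h]
    have := discrim_le_zero key
    rw [discrim] at this
    nlinarith
  have hcs : ∀ i j, |M i j| ≤ Real.sqrt (M i i) * Real.sqrt (M j j) := by
    intro i j
    rw [← Real.sqrt_sq_eq_abs, ← Real.sqrt_mul (hd i)]
    exact Real.sqrt_le_sqrt (hcs2 i j)
  set a : ℕ → ℝ := fun j => Real.sqrt (M j j) * |v j| with ha_def
  have ha0 : ∀ j, 0 ≤ a j := fun j => mul_nonneg (Real.sqrt_nonneg _) (abs_nonneg _)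
  have ha_sum : Summable a := by
    apply Summable.of_nonneg_of_le ha0 (fun j => ?_) ((htr.add hv).div_const 2)
    show Real.sqrt (M j j) * |v j| ≤ (M j j + v j ^ 2) / 2
    have h1 : Real.sqrt (M j j) ^ 2 = M j j := Real.sq_sqrt (hd j)
    have h2 : |v j| ^ 2 = v j ^ 2 := sq_abs _
    nlinarith [sq_nonneg (Real.sqrt (M j j) - |v j|)]
  set S : ℝ := ∑' j, a j with hS_def
  have hS0 : 0 ≤ S := tsum_nonneg ha0
  -- inner summability
  have hinner_abs : ∀ i, Summable fun j => |M i j * v j| := by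
    intro i
    apply Summable.of_nonneg_of_le (fun j => abs_nonneg _) (fun j => ?_)
      (ha_sum.mul_left (Real.sqrt (M i i)))
    rw [abs_mul]
    calc |M i j| * |v j| ≤ Real.sqrt (M i i) * Real.sqrt (M j j) * |v j| :=
          mul_le_mul_of_nonneg_right (hcs i j) (abs_nonneg _)
      _ = Real.sqrt (M i i) * a j := by rw [ha_def]; ring
  have hinner : ∀ i, Summable fun j => M i j * v j := fun i => (hinner_abs i).of_abs
  -- pointwise bound
  have hMv : ∀ i, (∑' j, M i j * v j) ^ 2 ≤ M i i * S ^ 2 := by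
    intro i
    have h1 : |∑' j, M i j * v j| ≤ Real.sqrt (M i i) * S := by
      calc |∑' j, M i j * v j| ≤ ∑' j, |M i j * v j| := by
            have := norm_tsum_le_tsum_norm (f := fun j => M i j * v j)
              (by simp only [Real.norm_eq_abs]; exact hinner_abs i)
            simp only [Real.norm_eq_abs] at this
            exact this
        _ ≤ ∑' j, Real.sqrt (M i i) * a j := by
            apply Summable.tsum_le_tsum _ (hinner_abs i) (ha_sum.mul_left _)
            intro j
            rw [abs_mul]
            calc |M i j| * |v j| ≤ Real.sqrt (M i i) * Real.sqrt (M j j) * |v j| :=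
                  mul_le_mul_of_nonneg_right (hcs i j) (abs_nonneg _)
              _ = Real.sqrt (M i i) * a j := by rw [ha_def]; ring
        _ = Real.sqrt (M i i) * S := tsum_mul_left
    calc (∑' j, M i j * v j) ^ 2 = |∑' j, M i j * v j| ^ 2 := (sq_abs _).symm
      _ ≤ (Real.sqrt (M i i) * S) ^ 2 := by
          exact pow_le_pow_left₀ (abs_nonneg _) h1 2
      _ = M i i * S ^ 2 := by rw [mul_pow, Real.sq_sqrt (hd i)]
  have hRHS_sum : Summable fun i => M i i * S ^ 2 := htr.mul_right _
  have hLHS_sum : Summable fun i => (∑' j, M i j * v j) ^ 2 :=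
    Summable.of_nonneg_of_le (fun i => sq_nonneg _) hMv hRHS_sum
  have hstep1 : ∑' i, (∑' j, M i j * v j) ^ 2 ≤ (∑' i, M i i) * S ^ 2 := by
    calc ∑' i, (∑' j, M i j * v j) ^ 2 ≤ ∑' i, M i i * S ^ 2 :=
          Summable.tsum_le_tsum hMv hLHS_sum hRHS_sum
      _ = (∑' i, M i i) * S ^ 2 := tsum_mul_right
  -- shift identities
  have hinj : Function.Injective fun h : ℕ => n + h := fun x y hxy => by simpa using hxy
  have hrange : ∀ {f : ℕ → ℝ}, (∀ i < n, f i = 0) →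
      Function.support f ⊆ Set.range (fun h : ℕ => n + h) := by
    intro f hf x hx
    by_contra hc
    simp only [Set.mem_range] at hc
    have : x < n := by by_contra h; exact hc ⟨x - n, by omega⟩
    exact hx (hf x this)
  have ha_supp : ∀ i < n, a i = 0 := fun i hi => by simp [ha_def, hsupp i hi]
  have hS_eq : S = ∑' h, a (n + h) := (hinj.tsum_eq (hrange ha_supp)).symm
  have hv_eq : (∑' i, (v i) ^ 2) = ∑' h, (v (n + h)) ^ 2 :=
    (hinj.tsum_eq (hrange (f := fun i => v i ^ 2) fun i hi => by simp [hsupp i hi])).symm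
  -- CS on the shifted sums
  have hMshift : Summable fun h => M (n + h) (n + h) := htr.comp_injective hinj
  have hvshift : Summable fun h => (v (n + h)) ^ 2 := hv.comp_injective hinj
  have hS_le : S ≤ Real.sqrt (∑' h, M (n + h) (n + h)) * Real.sqrt (∑' i, (v i) ^ 2) := by
    rw [hS_eq, hv_eq]
    have := tsum_cs (fun h => Real.sqrt (M (n + h) (n + h))) (fun h => |v (n + h)|)
      (fun h => Real.sqrt_nonneg _) (fun h => abs_nonneg _)
      (by simpa [Real.sq_sqrt, hd] using hMshift) (by simpa [sq_abs] using hvshift)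
    simpa [Real.sq_sqrt, hd, sq_abs] using this
  -- finish
  calc Real.sqrt (∑' i, (∑' j, M i j * v j) ^ 2)
      ≤ Real.sqrt ((∑' i, M i i) * S ^ 2) := Real.sqrt_le_sqrt hstep1
    _ = Real.sqrt (∑' i, M i i) * S := by
        rw [Real.sqrt_mul (tsum_nonneg fun i => hd i), Real.sqrt_sq hS0]
    _ ≤ Real.sqrt (∑' i, M i i) *
          (Real.sqrt (∑' h, M (n + h) (n + h)) * Real.sqrt (∑' i, (v i) ^ 2)) :=
        mul_le_mul_of_nonneg_left hS_le (Real.sqrt_nonneg _)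
    _ = Real.sqrt (∑' h : ℕ, M (n + h) (n + h)) *
          Real.sqrt (∑' h, M h h) * Real.sqrt (∑' i, (v i) ^ 2) := by ring
end

section
/- Let K : ℕ × ℕ → ℝ be a positive semidefinite kernel with Mercer expansion K(x,y) = Σ_i λ_i ρ_i(x)ρ_i(y), where {ρ_i} is an orthonormal basis of ℓ2, λ_i ≥ 0, and there exists A > 0 with ‖ρ_i‖_1 ≤ A whenever λ_i > 0. Then K is BIBO stable (induced operator bounded from ℓ∞ to ℓ1) if and only if Σ_i λ_i < ∞. -/
noncomputable def sgn (b : Bool) : ℝ := if b then 1 else -1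

lemma sgn_abs (b : Bool) : |sgn b| = 1 := by cases b <;> simp [sgn]

lemma sgn_not (b : Bool) : sgn (!b) = - sgn b := by cases b <;> simp [sgn]

lemma sgn_mul_self (b : Bool) : sgn b * sgn b = 1 := by cases b <;> simp [sgn]

open Finset in
lemma signSumLem {n : ℕ} (i j : Fin n) :
    ∑ ε : Fin n → Bool, sgn (ε i) * sgn (ε j)
      = if i = j then (2:ℝ)^n else 0 := by
  rcases eq_or_ne i j with rfl | hij
  · simp only [if_pos rfl, sgn_mul_self, Finset.sum_const, nsmul_eq_mul, mul_one]
    rw [Finset.card_univ]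
    simp [Fintype.card_fun]
  · rw [if_neg hij]
    have hinv : Function.Involutive
        (fun ε : Fin n → Bool => Function.update ε j (!(ε j))) := by
      intro ε
      funext k
      rcases eq_or_ne k j with rfl | hk
      · simp [Function.update_self]
      · simp [Function.update_of_ne hk]
    let e := hinv.toPerm
    have h := Equiv.sum_comp e (fun ε : Fin n → Bool => sgn (ε i) * sgn (ε j))
    have h2 : ∀ ε : Fin n → Bool,
        sgn ((e ε) i) * sgn ((e ε) j) = -(sgn (ε i) * sgn (ε j)) := by
      intro ε
      have hi : (e ε) i = ε i := Function.update_of_ne hij _ _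
      have hj : (e ε) j = !(ε j) := Function.update_self _ _ _
      rw [hi, hj, sgn_not]
      ring
    rw [Finset.sum_congr rfl (fun ε _ => h2 ε), Finset.sum_neg_distrib] at h
    linarith

open Finset in
lemma traceBound (K : ℕ → ℕ → ℝ) (C : ℝ)
    (hC : ∀ u : ℕ → ℝ, (∀ j, |u j| ≤ 1) →
      (∀ i, Summable fun j => K i j * u j) ∧
      Summable (fun i => |∑' j, K i j * u j|) ∧
      (∑' i, |∑' j, K i j * u j|) ≤ C)
    (n : ℕ) :
    ∑ i ∈ Finset.range n, K i i ≤ C := by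
  classical
  have key : ∀ ε : Fin n → Bool,
      ∑ i : Fin n, ∑ j : Fin n, sgn (ε i) * sgn (ε j) * K i j ≤ C := by
    intro ε
    set u : ℕ → ℝ := fun j => if h : j < n then sgn (ε ⟨j, h⟩) else 0 with hu
    have hub : ∀ j, |u j| ≤ 1 := by
      intro j; by_cases h : j < n <;> simp [hu, h, sgn_abs]
    obtain ⟨hs1, hs2, hs3⟩ := hC u hub
    have htsum : ∀ i : ℕ, (∑' j, K i j * u j) = ∑ j : Fin n, K i j * sgn (ε j) := by
      intro i
      rw [tsum_eq_sum (s := Finset.range n)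
        (by intro j hj
            have : ¬ j < n := by simpa using hj
            simp [hu, dif_neg this])]
      rw [← Fin.sum_univ_eq_sum_range (fun b => K i b * u b) n]
      refine Finset.sum_congr rfl fun j _ => ?_
      have : u (j : ℕ) = sgn (ε j) := by
        simp only [hu, dif_pos j.isLt, Fin.eta]
      rw [this]
    have h1 : ∀ i : Fin n, ∑ j : Fin n, sgn (ε i) * sgn (ε j) * K (i:ℕ) (j:ℕ)
        = sgn (ε i) * (∑' j, K (i:ℕ) j * u j) := by
      intro i
      rw [htsum, Finset.mul_sum]
      exact Finset.sum_congr rfl fun j _ => by ring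
    calc ∑ i : Fin n, ∑ j : Fin n, sgn (ε i) * sgn (ε j) * K (i:ℕ) (j:ℕ)
        = ∑ i : Fin n, sgn (ε i) * (∑' j, K (i:ℕ) j * u j) :=
          Finset.sum_congr rfl fun i _ => h1 i
      _ ≤ ∑ i : Fin n, |∑' j, K (i:ℕ) j * u j| := by
          refine Finset.sum_le_sum fun i _ => ?_
          calc sgn (ε i) * (∑' j, K (i:ℕ) j * u j)
              ≤ |sgn (ε i) * (∑' j, K (i:ℕ) j * u j)| := le_abs_self _
            _ = |∑' j, K (i:ℕ) j * u j| := by rw [abs_mul, sgn_abs, one_mul]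
      _ = ∑ i ∈ Finset.range n, |∑' j, K i j * u j| :=
          Fin.sum_univ_eq_sum_range (fun i => |∑' j, K i j * u j|) n
      _ ≤ ∑' i, |∑' j, K i j * u j| :=
          Summable.sum_le_tsum _ (fun i _ => abs_nonneg _) hs2
      _ ≤ C := hs3
  have hS : ∑ ε : Fin n → Bool, ∑ i : Fin n, ∑ j : Fin n,
      sgn (ε i) * sgn (ε j) * K (i:ℕ) (j:ℕ) = 2^n * ∑ i : Fin n, K (i:ℕ) (i:ℕ) := by
    rw [Finset.sum_comm]
    have : ∀ i : Fin n, ∑ ε : Fin n → Bool, ∑ j : Fin n,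
        sgn (ε i) * sgn (ε j) * K (i:ℕ) (j:ℕ) = 2^n * K (i:ℕ) (i:ℕ) := by
      intro i
      rw [Finset.sum_comm]
      have h2 : ∀ j : Fin n, ∑ ε : Fin n → Bool, sgn (ε i) * sgn (ε j) * K (i:ℕ) (j:ℕ)
          = (if i = j then (2:ℝ)^n else 0) * K (i:ℕ) (j:ℕ) := by
        intro j
        rw [← Finset.sum_mul, signSumLem]
      rw [Finset.sum_congr rfl fun j _ => h2 j]
      simp [Finset.sum_ite_eq, ite_mul]
    rw [Finset.sum_congr rfl fun i _ => this i, Finset.mul_sum]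
  have hcard : (Finset.univ : Finset (Fin n → Bool)).card = 2^n := by
    simp [Finset.card_univ, Fintype.card_fun]
  have hS2 : (2:ℝ)^n * ∑ i : Fin n, K (i:ℕ) (i:ℕ) ≤ 2^n * C := by
    rw [← hS]
    calc ∑ ε : Fin n → Bool, ∑ i : Fin n, ∑ j : Fin n,
          sgn (ε i) * sgn (ε j) * K (i:ℕ) (j:ℕ)
        ≤ ∑ _ε : Fin n → Bool, C := Finset.sum_le_sum fun ε _ => key ε
      _ = 2^n * C := by rw [Finset.sum_const, hcard]; ring
  have hfin : ∑ i : Fin n, K (i:ℕ) (i:ℕ) ≤ C :=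
    le_of_mul_le_mul_left hS2 (by positivity)
  rw [← Fin.sum_univ_eq_sum_range (fun i => K i i) n]
  exact hfin

/-- Let K be a PSD kernel with Mercer expansion
K(x,y) = Σ_i λ_i ρ_i(x)ρ_i(y), (ρ_i) an orthonormal basis of ℓ2, λ_i ≥ 0,
and suppose ‖ρ_i‖₁ ≤ A uniformly whenever λ_i > 0. Then K is BIBO stable
if and only if Σ_i λ_i < ∞. -/
theorem stmt19 (K : ℕ → ℕ → ℝ) (hK : KernelPSD K)
    (lam : ℕ → ℝ) (hnonneg : ∀ i, 0 ≤ lam i) (rho : ℕ → ℕ → ℝ)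
    (hl2 : ∀ i, Summable fun x => (rho i x) ^ 2)
    (horth : ∀ i j, (∑' x, rho i x * rho j x) = if i = j then 1 else 0)
    (hcomplete : ∀ v : ℕ → ℝ, (Summable fun x => (v x) ^ 2) →
      (∀ i, (∑' x, rho i x * v x) = 0) → v = 0)
    (hmercer : ∀ x y, (Summable fun i => lam i * rho i x * rho i y) ∧
      K x y = ∑' i, lam i * rho i x * rho i y)
    (A : ℝ) (hA : 0 < A)
    (hbound : ∀ i, 0 < lam i →
      (Summable fun x => |rho i x|) ∧ (∑' x, |rho i x|) ≤ A) :
    KernelStable K ↔ Summable lam := by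
  have hl2' : ∀ m, Summable fun x => rho m x * rho m x := by
    intro m
    exact (hl2 m).congr fun x => (sq (rho m x))
  constructor
  · rintro ⟨C, hC⟩
    have htr : ∀ n, ∑ i ∈ Finset.range n, K i i ≤ C := traceBound K C hC
    refine summable_of_sum_le (c := C) hnonneg ?_
    intro G
    have hsum_m : ∀ m, Summable fun x => lam m * (rho m x * rho m x) :=
      fun m => (hl2' m).mul_left _
    have hstep : ∀ m, lam m = ∑' x, lam m * (rho m x * rho m x) := by
      intro m
      rw [tsum_mul_left, horth m m]
      simp
    calc ∑ m ∈ G, lam m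
        = ∑ m ∈ G, ∑' x, lam m * (rho m x * rho m x) :=
          Finset.sum_congr rfl fun m _ => hstep m
      _ = ∑' x, ∑ m ∈ G, lam m * (rho m x * rho m x) :=
          (Summable.tsum_finsetSum fun m _ => hsum_m m).symm
      _ ≤ C := by
          refine Real.tsum_le_of_sum_range_le
            (fun x => Finset.sum_nonneg fun m _ =>
              mul_nonneg (hnonneg m) (mul_self_nonneg _)) ?_
          intro N
          calc ∑ x ∈ Finset.range N, ∑ m ∈ G, lam m * (rho m x * rho m x)
              ≤ ∑ x ∈ Finset.range N, K x x := by
                refine Finset.sum_le_sum fun x _ => ?_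
                rw [(hmercer x x).2]
                calc ∑ m ∈ G, lam m * (rho m x * rho m x)
                    = ∑ m ∈ G, lam m * rho m x * rho m x :=
                      Finset.sum_congr rfl fun m _ => (mul_assoc _ _ _).symm
                  _ ≤ ∑' m, lam m * rho m x * rho m x :=
                      Summable.sum_le_tsum G (fun m _ => by
                        have := mul_self_nonneg (rho m x)
                        have := hnonneg m
                        nlinarith) ((hmercer x x).1)
            _ ≤ C := htr N
  · intro hlam
    refine ⟨A * A * ∑' m, lam m, ?_⟩
    intro u hu
    set c : ℕ → ℝ := fun m => ∑' j, rho m j * u j with hc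
    have hrho1 : ∀ m x, |rho m x| ≤ 1 := by
      intro m x
      have hle : rho m x * rho m x ≤ 1 := by
        have h := Summable.le_tsum (hl2' m) x (fun y _ => mul_self_nonneg _)
        rw [horth m m] at h
        simpa using h
      exact abs_le_one_iff_mul_self_le_one.2 hle
    have habsmul : ∀ m, 0 < lam m → Summable fun j => |rho m j * u j| := by
      intro m hm
      refine Summable.of_nonneg_of_le (fun j => abs_nonneg _) (fun j => ?_)
        (hbound m hm).1
      rw [abs_mul]
      exact mul_le_of_le_one_right (abs_nonneg _) (hu j)
    have hcabs : ∀ m, 0 < lam m → |c m| ≤ A := by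
      intro m hm
      calc |c m| ≤ ∑' j, |rho m j * u j| := by
            have h := norm_tsum_le_tsum_norm (f := fun j => rho m j * u j)
              ((habsmul m hm).congr fun j => (Real.norm_eq_abs _).symm)
            simpa only [Real.norm_eq_abs] using h
        _ ≤ ∑' j, |rho m j| := by
            refine Summable.tsum_le_tsum (fun j => ?_) (habsmul m hm) (hbound m hm).1
            rw [abs_mul]
            exact mul_le_of_le_one_right (abs_nonneg _) (hu j)
        _ ≤ A := (hbound m hm).2
    -- the kernel-product family
    have hPabs : ∀ i : ℕ,
        Summable fun p : ℕ × ℕ => |lam p.1 * rho p.1 i * rho p.1 p.2 * u p.2| := by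
      intro i
      refine (summable_prod_of_nonneg (fun p => abs_nonneg _)).2 ⟨fun m => ?_, ?_⟩
      · rcases (hnonneg m).eq_or_lt with h0 | h0
        · refine summable_zero.congr fun j => ?_
          simp [← h0]
        · refine Summable.of_nonneg_of_le (fun j => abs_nonneg _) (fun j => ?_)
            (((hbound m h0).1).mul_left (lam m * |rho m i|))
          rw [abs_mul, abs_mul, abs_mul, abs_of_nonneg (hnonneg m), mul_assoc]
          refine mul_le_mul_of_nonneg_left ?_ (mul_nonneg (hnonneg m) (abs_nonneg _))
          exact mul_le_of_le_one_right (abs_nonneg _) (hu _)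
      · refine Summable.of_nonneg_of_le (fun m => tsum_nonneg fun j => abs_nonneg _)
          (fun m => ?_) (hlam.mul_right A)
        rcases (hnonneg m).eq_or_lt with h0 | h0
        · have : ∀ j : ℕ, |lam m * rho m i * rho m j * u j| = 0 := by
            intro j; simp [← h0]
          rw [tsum_congr this]
          simp [mul_nonneg (hnonneg m) hA.le]
        · calc (∑' j, |lam m * rho m i * rho m j * u j|)
              ≤ ∑' j, lam m * |rho m j| := by
                refine Summable.tsum_le_tsum (fun j => ?_)
                  (Summable.of_nonneg_of_le (fun j => abs_nonneg _) (fun j => ?_)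
                    (((hbound m h0).1).mul_left (lam m)))
                  (((hbound m h0).1).mul_left (lam m))
                · rw [abs_mul, abs_mul, abs_mul, abs_of_nonneg (hnonneg m)]
                  calc lam m * |rho m i| * |rho m j| * |u j|
                      ≤ lam m * |rho m i| * |rho m j| * 1 :=
                        mul_le_mul_of_nonneg_left (hu j)
                          (mul_nonneg (mul_nonneg (hnonneg m) (abs_nonneg _)) (abs_nonneg _))
                    _ = lam m * |rho m i| * |rho m j| := mul_one _
                    _ ≤ lam m * 1 * |rho m j| := by
                        refine mul_le_mul_of_nonneg_right ?_ (abs_nonneg _)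
                        exact mul_le_mul_of_nonneg_left (hrho1 m i) (hnonneg m)
                    _ = lam m * |rho m j| := by ring
                · rw [abs_mul, abs_mul, abs_mul, abs_of_nonneg (hnonneg m)]
                  calc lam m * |rho m i| * |rho m j| * |u j|
                      ≤ lam m * |rho m i| * |rho m j| * 1 :=
                        mul_le_mul_of_nonneg_left (hu j)
                          (mul_nonneg (mul_nonneg (hnonneg m) (abs_nonneg _)) (abs_nonneg _))
                    _ = lam m * |rho m i| * |rho m j| := mul_one _
                    _ ≤ lam m * 1 * |rho m j| := by
                        refine mul_le_mul_of_nonneg_right ?_ (abs_nonneg _)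
                        exact mul_le_mul_of_nonneg_left (hrho1 m i) (hnonneg m)
                    _ = lam m * |rho m j| := by ring
              _ = lam m * ∑' j, |rho m j| := tsum_mul_left
              _ ≤ lam m * A := mul_le_mul_of_nonneg_left (hbound m h0).2 (hnonneg m)
    have hP : ∀ i : ℕ,
        Summable fun p : ℕ × ℕ => lam p.1 * rho p.1 i * rho p.1 p.2 * u p.2 :=
      fun i => (hPabs i).of_abs
    have hKrow : ∀ i j, K i j * u j = ∑' m, lam m * rho m i * rho m j * u j := by
      intro i j
      rw [(hmercer i j).2, ← tsum_mul_right]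
    have hrow_sum : ∀ i, Summable fun j => K i j * u j := by
      intro i
      exact ((hP i).prod_symm.prod).congr fun j => (hKrow i j).symm
    have heq : ∀ i, (∑' j, K i j * u j) = ∑' m, lam m * rho m i * c m := by
      intro i
      calc (∑' j, K i j * u j)
          = ∑' j, ∑' m, lam m * rho m i * rho m j * u j := tsum_congr (hKrow i)
        _ = ∑' m, ∑' j, lam m * rho m i * rho m j * u j :=
            Summable.tsum_comm (f := fun m j => lam m * rho m i * rho m j * u j) (hP i)
        _ = ∑' m, lam m * rho m i * c m := by
            refine tsum_congr fun m => ?_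
            rw [show (fun j => lam m * rho m i * rho m j * u j)
              = fun j => (lam m * rho m i) * (rho m j * u j) from funext fun j => by ring]
            exact tsum_mul_left
    -- the majorant family Q
    have hQrow : ∀ m, (∑' x, (lam m * |c m|) * |rho m x|) ≤ lam m * (A * A) := by
      intro m
      rcases (hnonneg m).eq_or_lt with h0 | h0
      · have : ∀ x : ℕ, (lam m * |c m|) * |rho m x| = 0 := by
          intro x; simp [← h0]
        rw [tsum_congr this]
        simp [← h0]
      · calc (∑' x, (lam m * |c m|) * |rho m x|)
            = (lam m * |c m|) * ∑' x, |rho m x| := tsum_mul_left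
          _ ≤ (lam m * A) * A := by
              refine mul_le_mul (mul_le_mul_of_nonneg_left (hcabs m h0) (hnonneg m))
                (hbound m h0).2 (tsum_nonneg fun x => abs_nonneg _)
                (mul_nonneg (hnonneg m) hA.le)
          _ = lam m * (A * A) := by ring
    have hQm : ∀ m, Summable fun x => (lam m * |c m|) * |rho m x| := by
      intro m
      rcases (hnonneg m).eq_or_lt with h0 | h0
      · refine summable_zero.congr fun x => ?_
        simp [← h0]
      · exact ((hbound m h0).1).mul_left _
    have hQ : Summable (fun p : ℕ × ℕ => (lam p.1 * |c p.1|) * |rho p.1 p.2|) := by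
      refine (summable_prod_of_nonneg ?_).2 ⟨hQm, ?_⟩
      · intro p
        exact mul_nonneg (mul_nonneg (hnonneg _) (abs_nonneg _)) (abs_nonneg _)
      · refine Summable.of_nonneg_of_le
          (fun m => tsum_nonneg fun x => mul_nonneg
            (mul_nonneg (hnonneg _) (abs_nonneg _)) (abs_nonneg _))
          (fun m => ?_) (hlam.mul_right (A * A))
        exact hQrow m
    have hQslice : ∀ i, Summable fun m => (lam m * |c m|) * |rho m i| :=
      fun i => hQ.prod_symm.prod_factor i
    have hQsums : Summable fun i => ∑' m, (lam m * |c m|) * |rho m i| :=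
      hQ.prod_symm.prod
    have habseq : ∀ i m, |lam m * rho m i * c m| = (lam m * |c m|) * |rho m i| := by
      intro i m
      rw [abs_mul, abs_mul, abs_of_nonneg (hnonneg m)]
      ring
    have habs_term : ∀ i, |∑' j, K i j * u j| ≤ ∑' m, (lam m * |c m|) * |rho m i| := by
      intro i
      rw [heq i]
      calc |∑' m, lam m * rho m i * c m| ≤ ∑' m, |lam m * rho m i * c m| := by
            have h := norm_tsum_le_tsum_norm (f := fun m => lam m * rho m i * c m)
              (((hQslice i).congr fun m => (habseq i m).symm).congr
                fun m => (Real.norm_eq_abs _).symm)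
            simpa only [Real.norm_eq_abs] using h
        _ = ∑' m, (lam m * |c m|) * |rho m i| := tsum_congr fun m => habseq i m
    have hsumabs : Summable fun i => |∑' j, K i j * u j| :=
      Summable.of_nonneg_of_le (fun i => abs_nonneg _) habs_term hQsums
    refine ⟨hrow_sum, hsumabs, ?_⟩
    calc (∑' i, |∑' j, K i j * u j|)
        ≤ ∑' i, ∑' m, (lam m * |c m|) * |rho m i| :=
          Summable.tsum_le_tsum habs_term hsumabs hQsums
      _ = ∑' m, ∑' x, (lam m * |c m|) * |rho m x| :=
          Summable.tsum_comm (f := fun m x => (lam m * |c m|) * |rho m x|) hQ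
      _ ≤ ∑' m, lam m * (A * A) :=
          Summable.tsum_le_tsum hQrow hQ.prod (hlam.mul_right _)
      _ = A * A * ∑' m, lam m := by rw [tsum_mul_right]; ring
end
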